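/- Let T and V be N×N real matrices and Δt > 0, and define the leapfrog energy functional for the 1D model e^{n+1} = e^n + Δt T h^{n+1/2}, h^{n+1/2} = h^{n−1/2} − Δt V e^n with V = Tᵀ. Then the quantity Q^n = ⟨e^n, e^n⟩ + ⟨h^{n+1/2}, h^{n−1/2}⟩ is conserved: Q^{n+1} = Q^n for all n. -/
import Mathlib

open Matrix

/-- Discrete energy conservation of the explicit staggered leapfrog scheme
`e^{n+1} = e^n + Δt T h^{n+1/2}`, `h^{n+1/2} = h^{n−1/2} − Δt V e^n` with `V = Tᵀ`:
the quantity `Q^n = ⟨e^n, e^n⟩ + ⟨h^{n+1/2}, h^{n−1/2}⟩` is conserved.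
Here `h n` denotes `h^{n−1/2}`. -/
theorem stmt_13 {N : ℕ} (T V : Matrix (Fin N) (Fin N) ℝ) (hV : V = T.transpose)
    (Δt : ℝ) (hΔt : 0 < Δt) (e h : ℕ → Fin N → ℝ)
    (hh : ∀ n : ℕ, h (n + 1) = h n - Δt • V.mulVec (e n))
    (he : ∀ n : ℕ, e (n + 1) = e n + Δt • T.mulVec (h (n + 1))) :
    ∀ n : ℕ,
      e (n + 1) ⬝ᵥ e (n + 1) + h (n + 2) ⬝ᵥ h (n + 1) =
        e n ⬝ᵥ e n + h (n + 1) ⬝ᵥ h n := by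
  intro n
  rw [hh (n + 1), he n, hh n, hV]
  simp only [Matrix.mulVec_transpose, dotProduct_add, add_dotProduct, dotProduct_sub,
    sub_dotProduct, dotProduct_smul, smul_dotProduct, Matrix.vecMul_transpose, smul_eq_mul,
    dotProduct_comm (h n), dotProduct_comm (T *ᵥ (h n - Δt • e n ᵥ* T)) (e n),
    Matrix.dotProduct_mulVec]
  ring
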